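/- Let Φ ∈ ℚ[[x,s]] be the unique formal power series with Φ = exp(x + sΦ), and let Ψ₁ := −(1/2)·log(1 − sΦ). Suppose Ψ₂ ∈ ℚ[[x,s]] satisfies ∂Ψ₂/∂s = (1/2)·( ∂²Ψ₁/∂x² + 2Φ·∂Ψ₂/∂x + (∂Ψ₁/∂x)² ) with initial condition Ψ₂|_{s=0} = 0. Then Ψ₂ = Φ^{−1}·( (5/24)·Y³ + (1/8)·Y² ), where Y := sΦ·(1 − sΦ)^{−1}. (Here Φ and 1 − sΦ are units of ℚ[[x,s]] since Φ has constant coefficient 1.) -/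

import Mathlib

/-- Formal partial derivative `∂f/∂x_i` of a multivariate formal power series. -/
noncomputable def pd {σ : Type*} (R : Type*) [CommSemiring R]
    (i : σ) (f : MvPowerSeries σ R) : MvPowerSeries σ R :=
  fun m => (((m i) + 1 : ℕ) : R) * MvPowerSeries.coeff (R := R) (m + Finsupp.single i 1) f

/-- Total degree of a monomial. -/
def mdeg {σ : Type*} (m : σ →₀ ℕ) : ℕ := m.sum fun _ e => e

/-- `exp f = Σ_{k≥0} f^k/k!` for `f` with zero constant coefficient, computed
coefficientwise: since `f^k` has order `≥ k`, only `k ≤ deg m` contribute to the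
coefficient at a monomial `m`. -/
noncomputable def expS {σ R : Type*} [CommRing R] [Algebra ℚ R]
    (f : MvPowerSeries σ R) : MvPowerSeries σ R :=
  fun m => MvPowerSeries.coeff (R := R) m
    (∑ k ∈ Finset.range (mdeg m + 1), ((k.factorial : ℚ)⁻¹) • f ^ k)

/-- `log(1 − u) = −Σ_{k≥1} u^k/k` for `u` with zero constant coefficient, computed
coefficientwise: since `u^k` has order `≥ k`, only `k ≤ deg m` contribute. -/
noncomputable def logOneSubS {σ R : Type*} [CommRing R] [Algebra ℚ R]
    (u : MvPowerSeries σ R) : MvPowerSeries σ R :=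
  fun m => MvPowerSeries.coeff (R := R) m
    (- ∑ k ∈ Finset.Icc 1 (mdeg m), ((k : ℚ)⁻¹) • u ^ k)

/-- The genus-one counting series `Ψ₁ = −½·log(1 − sΦ)`. -/
noncomputable def psiOneComb (Φ : MvPowerSeries (Fin 2) ℚ) : MvPowerSeries (Fin 2) ℚ :=
  -((2 : ℚ)⁻¹) • logOneSubS (MvPowerSeries.X 1 * Φ)

/-- `Y := sΦ·(1 − sΦ)⁻¹`. -/
noncomputable def yComb (Φ : MvPowerSeries (Fin 2) ℚ) : MvPowerSeries (Fin 2) ℚ :=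
  MvPowerSeries.X 1 * Φ * (1 - MvPowerSeries.X 1 * Φ)⁻¹

namespace Aux
open MvPowerSeries Finset

set_option linter.unusedSectionVars false

variable {σ : Type*} [DecidableEq σ] {R : Type*} [CommRing R]

theorem pd_coeff (i : σ) (f : MvPowerSeries σ R) (m : σ →₀ ℕ) :
    MvPowerSeries.coeff (R := R) m (pd R i f)
      = ((m i + 1 : ℕ) : R) * MvPowerSeries.coeff (R := R) (m + Finsupp.single i 1) f := rfl
theorem pd_add (i : σ) (f g : MvPowerSeries σ R) :
    pd R i (f + g) = pd R i f + pd R i g := by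
  apply MvPowerSeries.ext; intro m
  simp [pd_coeff, mul_add]

theorem pd_smul (i : σ) (q : R) (f : MvPowerSeries σ R) :
    pd R i (q • f) = q • pd R i f := by
  apply MvPowerSeries.ext; intro m
  simp only [pd_coeff, MvPowerSeries.coeff_smul, smul_eq_mul]
  ring

theorem pd_neg (i : σ) (f : MvPowerSeries σ R) : pd R i (-f) = -pd R i f := by
  apply MvPowerSeries.ext; intro m
  simp [pd_coeff]

theorem pd_sub (i : σ) (f g : MvPowerSeries σ R) :
    pd R i (f - g) = pd R i f - pd R i g := by
  rw [sub_eq_add_neg, pd_add, pd_neg, sub_eq_add_neg]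

theorem pd_one (i : σ) : pd R i (1 : MvPowerSeries σ R) = 0 := by
  apply MvPowerSeries.ext; intro m
  have h : m + Finsupp.single i 1 ≠ 0 := by
    intro h
    have := DFunLike.congr_fun h i
    simp [Finsupp.single_apply] at this
  simp [pd_coeff, MvPowerSeries.coeff_one, h]

theorem pd_C (i : σ) (q : R) : pd R i (MvPowerSeries.C (σ := σ) (R := R) q) = 0 := by
  apply MvPowerSeries.ext; intro m
  have h : m + Finsupp.single i 1 ≠ 0 := by
    intro h
    have := DFunLike.congr_fun h i
    simp [Finsupp.single_apply] at this
  simp [pd_coeff, MvPowerSeries.coeff_C, h]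

theorem pd_X_self (i : σ) : pd R i (MvPowerSeries.X i : MvPowerSeries σ R) = 1 := by
  apply MvPowerSeries.ext; intro m
  rw [pd_coeff, MvPowerSeries.coeff_X, MvPowerSeries.coeff_one]
  rcases eq_or_ne m 0 with h | h
  · subst h; simp
  · have h2 : m + Finsupp.single i 1 ≠ Finsupp.single i 1 := by
      intro hc
      exact h (by simpa using add_right_cancel (hc.trans (zero_add (Finsupp.single i 1)).symm))
    simp [h, h2]

theorem pd_X_ne (i j : σ) (h : j ≠ i) :
    pd R i (MvPowerSeries.X j : MvPowerSeries σ R) = 0 := by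
  apply MvPowerSeries.ext; intro m
  rw [pd_coeff, MvPowerSeries.coeff_X]
  have h2 : m + Finsupp.single i 1 ≠ Finsupp.single j 1 := by
    intro hc
    have := DFunLike.congr_fun hc i
    rw [Finsupp.add_apply, Finsupp.single_apply, Finsupp.single_apply, if_pos rfl, if_neg h] at this
    exact Nat.succ_ne_zero _ this
  simp [h2]


theorem shift_sum (i : σ) (m : σ →₀ ℕ) (F : (σ →₀ ℕ) → (σ →₀ ℕ) → R) :
    Finset.sum (Finset.HasAntidiagonal.antidiagonal (m + Finsupp.single i 1))
        (fun pq : (σ →₀ ℕ) × (σ →₀ ℕ) => ((pq.1 i : ℕ) : R) * F pq.1 pq.2)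
      = Finset.sum (Finset.HasAntidiagonal.antidiagonal m)
        (fun pq : (σ →₀ ℕ) × (σ →₀ ℕ) =>
          ((pq.1 i + 1 : ℕ) : R) * F (pq.1 + Finsupp.single i 1) pq.2) := by
  classical
  rw [← Finset.sum_filter_of_ne
      (p := fun pq : (σ →₀ ℕ) × (σ →₀ ℕ) => pq.1 i ≠ 0)
      (by intro x hx hne h0; exact hne (by rw [h0]; simp))]
  refine Finset.sum_nbij' (fun pq : (σ →₀ ℕ) × (σ →₀ ℕ) => (pq.1 - Finsupp.single i 1, pq.2))
    (fun pq : (σ →₀ ℕ) × (σ →₀ ℕ) => (pq.1 + Finsupp.single i 1, pq.2)) ?_ ?_ ?_ ?_ ?_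
  · rintro ⟨p, q⟩ hpq
    simp only [Finset.mem_filter, Finset.HasAntidiagonal.mem_antidiagonal] at hpq
    obtain ⟨hsum, hne⟩ := hpq
    simp only [Finset.HasAntidiagonal.mem_antidiagonal]
    ext x
    have hx := DFunLike.congr_fun hsum x
    rcases eq_or_ne i x with rfl | hix
    · simp only [Finsupp.add_apply, Finsupp.tsub_apply, Finsupp.single_eq_same] at *
      omega
    · simp only [Finsupp.add_apply, Finsupp.tsub_apply, Finsupp.single_eq_of_ne hix.symm] at *
      omega
  · rintro ⟨p, q⟩ hpq
    simp only [Finset.HasAntidiagonal.mem_antidiagonal] at hpq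
    simp only [Finset.mem_filter, Finset.HasAntidiagonal.mem_antidiagonal]
    constructor
    · ext x
      have hx := DFunLike.congr_fun hpq x
      rcases eq_or_ne i x with rfl | hix
      · simp only [Finsupp.add_apply, Finsupp.single_eq_same] at *
        omega
      · simp only [Finsupp.add_apply, Finsupp.single_eq_of_ne hix] at *
        omega
    · simp
  · rintro ⟨p, q⟩ hpq
    simp only [Finset.mem_filter, Finset.HasAntidiagonal.mem_antidiagonal] at hpq
    obtain ⟨_, hne⟩ := hpq
    have hle : Finsupp.single i 1 ≤ p := by
      rw [Finsupp.single_le_iff]; omega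
    simp [tsub_add_cancel_of_le hle]
  · rintro ⟨p, q⟩ _
    simp
  · rintro ⟨p, q⟩ hpq
    simp only [Finset.mem_filter, Finset.HasAntidiagonal.mem_antidiagonal] at hpq
    obtain ⟨_, hne⟩ := hpq
    have hle : Finsupp.single i 1 ≤ p := by
      rw [Finsupp.single_le_iff]; omega
    simp only
    rw [tsub_add_cancel_of_le hle]
    congr 2
    simp only [Finsupp.tsub_apply, Finsupp.single_eq_same]
    omega

theorem shift_sum₂ (i : σ) (m : σ →₀ ℕ) (F : (σ →₀ ℕ) → (σ →₀ ℕ) → R) :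
    Finset.sum (Finset.HasAntidiagonal.antidiagonal (m + Finsupp.single i 1))
        (fun pq : (σ →₀ ℕ) × (σ →₀ ℕ) => ((pq.2 i : ℕ) : R) * F pq.1 pq.2)
      = Finset.sum (Finset.HasAntidiagonal.antidiagonal m)
        (fun pq : (σ →₀ ℕ) × (σ →₀ ℕ) =>
          ((pq.2 i + 1 : ℕ) : R) * F pq.1 (pq.2 + Finsupp.single i 1)) := by
  have swap : ∀ (n : σ →₀ ℕ) (G : (σ →₀ ℕ) → (σ →₀ ℕ) → R),
      Finset.sum (Finset.HasAntidiagonal.antidiagonal n) (fun pq : (σ →₀ ℕ) × (σ →₀ ℕ) => G pq.1 pq.2)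
        = Finset.sum (Finset.HasAntidiagonal.antidiagonal n) (fun pq : (σ →₀ ℕ) × (σ →₀ ℕ) => G pq.2 pq.1) := by
    intro n G
    exact Finset.sum_nbij' (fun pq : (σ →₀ ℕ) × (σ →₀ ℕ) => (pq.2, pq.1))
      (fun pq : (σ →₀ ℕ) × (σ →₀ ℕ) => (pq.2, pq.1))
      (by rintro ⟨p, q⟩ h; simp only [Finset.HasAntidiagonal.mem_antidiagonal] at *; rw [add_comm] at h; exact h)
      (by rintro ⟨p, q⟩ h; simp only [Finset.HasAntidiagonal.mem_antidiagonal] at *; rw [add_comm] at h; exact h)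
      (by simp) (by simp) (by simp)
  exact ((swap (m + Finsupp.single i 1) (fun p q => ((q i : ℕ) : R) * F p q)).trans
    (shift_sum i m (fun p q => F q p))).trans
    (swap m (fun p q => ((p i + 1 : ℕ) : R) * F q (p + Finsupp.single i 1)))


theorem pd_mul (i : σ) (f g : MvPowerSeries σ R) :
    pd R i (f * g) = pd R i f * g + f * pd R i g := by
  apply MvPowerSeries.ext; intro m
  rw [map_add, pd_coeff, MvPowerSeries.coeff_mul, MvPowerSeries.coeff_mul,
    MvPowerSeries.coeff_mul, Finset.mul_sum]
  have key : ∀ pq ∈ Finset.HasAntidiagonal.antidiagonal (m + Finsupp.single i 1),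
      ((m i + 1 : ℕ) : R) * (MvPowerSeries.coeff (R := R) pq.1 f * MvPowerSeries.coeff (R := R) pq.2 g)
      = ((pq.1 i : ℕ) : R) * (MvPowerSeries.coeff (R := R) pq.1 f * MvPowerSeries.coeff (R := R) pq.2 g)
        + ((pq.2 i : ℕ) : R) * (MvPowerSeries.coeff (R := R) pq.1 f * MvPowerSeries.coeff (R := R) pq.2 g) := by
    rintro ⟨p, q⟩ hpq
    dsimp only
    simp only [Finset.HasAntidiagonal.mem_antidiagonal] at hpq
    have hx := DFunLike.congr_fun hpq i
    simp only [Finsupp.add_apply, Finsupp.single_eq_same] at hx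
    rw [← add_mul, ← Nat.cast_add]
    congr 2
    omega
  rw [Finset.sum_congr rfl key, Finset.sum_add_distrib,
    shift_sum i m (fun p q => MvPowerSeries.coeff (R := R) p f * MvPowerSeries.coeff (R := R) q g),
    shift_sum₂ i m (fun p q => MvPowerSeries.coeff (R := R) p f * MvPowerSeries.coeff (R := R) q g)]
  congr 1
  · apply Finset.sum_congr rfl
    rintro ⟨p, q⟩ _
    rw [pd_coeff]; ring
  · apply Finset.sum_congr rfl
    rintro ⟨p, q⟩ _
    rw [pd_coeff]; ring

theorem pd_pow (i : σ) (f : MvPowerSeries σ R) (n : ℕ) :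
    pd R i (f ^ (n + 1)) = ((n + 1 : ℕ) : MvPowerSeries σ R) * f ^ n * pd R i f := by
  induction n with
  | zero => simp [pd_mul]
  | succ n ih =>
    rw [pow_succ, pd_mul, ih, pow_succ]
    push_cast
    ring

theorem pd_sq (i : σ) (f : MvPowerSeries σ R) :
    pd R i (f ^ 2) = 2 * f * pd R i f := by
  have h := pd_pow i f 1
  rw [pow_one] at h
  rw [h]
  norm_num

theorem pd_cube (i : σ) (f : MvPowerSeries σ R) :
    pd R i (f ^ 3) = 3 * f ^ 2 * pd R i f := by
  have h := pd_pow i f 2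
  rw [h]
  norm_num

theorem pd_zero (i : σ) : pd R i (0 : MvPowerSeries σ R) = 0 := by
  apply MvPowerSeries.ext; intro m
  simp [pd_coeff]

theorem pd_sum {α : Type*} (i : σ) (s : Finset α) (f : α → MvPowerSeries σ R) :
    pd R i (∑ a ∈ s, f a) = ∑ a ∈ s, pd R i (f a) := by
  classical
  induction s using Finset.induction with
  | empty => simp [pd_zero]
  | insert _ _ hns ih =>
    rw [Finset.sum_insert hns, Finset.sum_insert hns, pd_add, ih]

theorem mdeg_add (p q : σ →₀ ℕ) : mdeg (p + q) = mdeg p + mdeg q :=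
  Finsupp.sum_add_index' (fun _ => rfl) (fun _ _ _ => rfl)

theorem mdeg_single (i : σ) : mdeg (Finsupp.single i 1) = 1 := by
  unfold mdeg
  rw [Finsupp.sum_single_index rfl]

theorem mdeg_zero : mdeg (0 : σ →₀ ℕ) = 0 := rfl

theorem one_le_mdeg {p : σ →₀ ℕ} (h : p ≠ 0) : 1 ≤ mdeg p := by
  obtain ⟨x, hx⟩ := DFunLike.ne_iff.mp h
  simp only [Finsupp.coe_zero, Pi.zero_apply] at hx
  have hmem : x ∈ p.support := Finsupp.mem_support_iff.mpr hx
  refine le_trans (by omega : 1 ≤ p x) ?_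
  exact Finset.single_le_sum (f := fun y => p y) (fun _ _ => Nat.zero_le _) hmem

end Aux

namespace AuxQ
open MvPowerSeries Finset Aux

variable {σ : Type*} [DecidableEq σ]

theorem coeff_pow_zero (f : MvPowerSeries σ ℚ) (hf : MvPowerSeries.constantCoeff (σ := σ) (R := ℚ) f = 0) :
    ∀ (k : ℕ) (m : σ →₀ ℕ), mdeg m < k → MvPowerSeries.coeff (R := ℚ) m (f ^ k) = 0 := by
  intro k
  induction k with
  | zero => intro m hm; omega
  | succ k ih =>
    intro m hm
    rw [pow_succ, MvPowerSeries.coeff_mul]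
    apply Finset.sum_eq_zero
    rintro ⟨p, q⟩ hpq
    simp only [Finset.HasAntidiagonal.mem_antidiagonal] at hpq
    dsimp only
    rcases eq_or_ne q 0 with rfl | hq
    · rw [MvPowerSeries.coeff_zero_eq_constantCoeff, hf, mul_zero]
    · have h1 : 1 ≤ mdeg q := one_le_mdeg hq
      have h2 : mdeg p + mdeg q = mdeg m := by rw [← mdeg_add, hpq]
      rw [ih p (by omega), zero_mul]

noncomputable def ES (f : MvPowerSeries σ ℚ) (N : ℕ) : MvPowerSeries σ ℚ :=
  ∑ k ∈ Finset.range (N + 1), ((k.factorial : ℚ)⁻¹) • f ^ k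

theorem coeff_expS_eq (f : MvPowerSeries σ ℚ) (hf : MvPowerSeries.constantCoeff (σ := σ) (R := ℚ) f = 0)
    (m : σ →₀ ℕ) (N : ℕ) (h : mdeg m ≤ N) :
    MvPowerSeries.coeff (R := ℚ) m (expS f) = MvPowerSeries.coeff (R := ℚ) m (ES f N) := by
  have h0 : MvPowerSeries.coeff (R := ℚ) m (expS f) = MvPowerSeries.coeff (R := ℚ) m (ES f (mdeg m)) := rfl
  rw [h0, ES, ES, map_sum, map_sum]
  apply Finset.sum_subset
  · exact Finset.range_subset_range.mpr (by omega)
  · intro k hk hnk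
    simp only [Finset.mem_range] at hk hnk
    simp [MvPowerSeries.coeff_smul, coeff_pow_zero f hf k m (by omega)]

theorem constantCoeff_expS (f : MvPowerSeries σ ℚ) :
    MvPowerSeries.constantCoeff (σ := σ) (R := ℚ) (expS f) = 1 := by
  rw [← MvPowerSeries.coeff_zero_eq_constantCoeff]
  have h0 : MvPowerSeries.coeff (R := ℚ) (0 : σ →₀ ℕ) (expS f)
      = MvPowerSeries.coeff (R := ℚ) (0 : σ →₀ ℕ)
        (∑ k ∈ Finset.range (mdeg (0 : σ →₀ ℕ) + 1), ((k.factorial : ℚ)⁻¹) • f ^ k) := rfl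
  rw [h0, mdeg_zero, Finset.sum_range_one]
  simp

theorem mul_coeff_congr (h g g' : MvPowerSeries σ ℚ) (m : σ →₀ ℕ)
    (hg : ∀ q, mdeg q ≤ mdeg m → MvPowerSeries.coeff (R := ℚ) q g = MvPowerSeries.coeff (R := ℚ) q g') :
    MvPowerSeries.coeff (R := ℚ) m (h * g) = MvPowerSeries.coeff (R := ℚ) m (h * g') := by
  rw [MvPowerSeries.coeff_mul, MvPowerSeries.coeff_mul]
  apply Finset.sum_congr rfl
  rintro ⟨p, q⟩ hpq
  simp only [Finset.HasAntidiagonal.mem_antidiagonal] at hpq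
  dsimp only
  rw [hg q (by have := mdeg_add p q; rw [hpq] at this; omega)]

theorem coeff_mul_pow_high (h u : MvPowerSeries σ ℚ)
    (hu : MvPowerSeries.constantCoeff (σ := σ) (R := ℚ) u = 0) (m : σ →₀ ℕ) (N : ℕ) (hN : mdeg m < N) :
    MvPowerSeries.coeff (R := ℚ) m (h * u ^ N) = 0 := by
  rw [MvPowerSeries.coeff_mul]
  apply Finset.sum_eq_zero
  rintro ⟨p, q⟩ hpq
  simp only [Finset.HasAntidiagonal.mem_antidiagonal] at hpq
  dsimp only
  have hq : mdeg q ≤ mdeg m := by have := mdeg_add p q; rw [hpq] at this; omega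
  rw [coeff_pow_zero u hu N q (by omega), mul_zero]

theorem pd_ES (i : σ) (f : MvPowerSeries σ ℚ) (N : ℕ) :
    pd ℚ i (ES f (N + 1)) = pd ℚ i f * ES f N := by
  rw [ES, pd_sum, Finset.sum_range_succ']
  have h0 : pd ℚ i (((Nat.factorial 0 : ℚ)⁻¹) • f ^ 0) = 0 := by
    simp [pd_smul, pd_one]
  rw [h0, add_zero]
  have hterm : ∀ j : ℕ, pd ℚ i ((((j + 1).factorial : ℚ)⁻¹) • f ^ (j + 1))
      = ((j.factorial : ℚ)⁻¹) • (f ^ j * pd ℚ i f) := by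
    intro j
    rw [pd_smul, pd_pow]
    have hsc : (((j + 1).factorial : ℚ)⁻¹) • (((j + 1 : ℕ) : MvPowerSeries σ ℚ) * f ^ j * pd ℚ i f)
        = ((((j + 1).factorial : ℚ)⁻¹ * ((j + 1 : ℕ) : ℚ))) • (f ^ j * pd ℚ i f) := by
      rw [mul_assoc, ← nsmul_eq_mul, ← Nat.cast_smul_eq_nsmul ℚ, smul_smul]
    rw [hsc]
    congr 1
    rw [Nat.factorial_succ]
    push_cast
    rw [mul_inv]
    field_simp
  calc ∑ j ∈ Finset.range (N + 1), pd ℚ i ((((j + 1).factorial : ℚ)⁻¹) • f ^ (j + 1))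
      = ∑ j ∈ Finset.range (N + 1), ((j.factorial : ℚ)⁻¹) • (f ^ j * pd ℚ i f) := by
        exact Finset.sum_congr rfl fun j _ => hterm j
    _ = (∑ j ∈ Finset.range (N + 1), ((j.factorial : ℚ)⁻¹) • f ^ j) * pd ℚ i f := by
        rw [Finset.sum_mul]
        exact Finset.sum_congr rfl fun j _ => (smul_mul_assoc _ _ _).symm
    _ = pd ℚ i f * ES f N := by rw [mul_comm, ES]

theorem pd_expS (i : σ) (f : MvPowerSeries σ ℚ) (hf : MvPowerSeries.constantCoeff (σ := σ) (R := ℚ) f = 0) :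
    pd ℚ i (expS f) = pd ℚ i f * expS f := by
  apply MvPowerSeries.ext; intro m
  have hmd : mdeg (m + Finsupp.single i 1) = mdeg m + 1 := by
    rw [mdeg_add, mdeg_single]
  calc MvPowerSeries.coeff (R := ℚ) m (pd ℚ i (expS f))
      = ((m i + 1 : ℕ) : ℚ) * MvPowerSeries.coeff (R := ℚ) (m + Finsupp.single i 1) (expS f) := rfl
    _ = ((m i + 1 : ℕ) : ℚ) * MvPowerSeries.coeff (R := ℚ) (m + Finsupp.single i 1)
          (ES f (mdeg m + 1)) := by
        rw [coeff_expS_eq f hf _ (mdeg m + 1) (by omega)]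
    _ = MvPowerSeries.coeff (R := ℚ) m (pd ℚ i (ES f (mdeg m + 1))) := rfl
    _ = MvPowerSeries.coeff (R := ℚ) m (pd ℚ i f * ES f (mdeg m)) := by rw [pd_ES]
    _ = MvPowerSeries.coeff (R := ℚ) m (pd ℚ i f * expS f) := by
        apply mul_coeff_congr
        intro q hq
        exact (coeff_expS_eq f hf q (mdeg m) hq).symm

end AuxQ

namespace AuxQ
open MvPowerSeries Finset Aux

variable {σ : Type*} [DecidableEq σ]

noncomputable def LS (u : MvPowerSeries σ ℚ) (N : ℕ) : MvPowerSeries σ ℚ :=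
  - ∑ k ∈ Finset.Icc 1 N, ((k : ℚ)⁻¹) • u ^ k

theorem coeff_logOneSubS_eq (u : MvPowerSeries σ ℚ)
    (hu : MvPowerSeries.constantCoeff (σ := σ) (R := ℚ) u = 0) (m : σ →₀ ℕ) (N : ℕ) (h : mdeg m ≤ N) :
    MvPowerSeries.coeff (R := ℚ) m (logOneSubS u) = MvPowerSeries.coeff (R := ℚ) m (LS u N) := by
  have h0 : MvPowerSeries.coeff (R := ℚ) m (logOneSubS u)
      = MvPowerSeries.coeff (R := ℚ) m (LS u (mdeg m)) := rfl
  rw [h0, LS, LS, map_neg, map_neg, map_sum, map_sum]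
  congr 1
  apply Finset.sum_subset
  · exact Finset.Icc_subset_Icc_right (by omega)
  · intro k hk hnk
    simp only [Finset.mem_Icc] at hk hnk
    simp [MvPowerSeries.coeff_smul, coeff_pow_zero u hu k m (by omega)]

theorem pd_LS (i : σ) (u : MvPowerSeries σ ℚ) (N : ℕ) :
    pd ℚ i (LS u (N + 1)) = -((∑ j ∈ Finset.range (N + 1), u ^ j) * pd ℚ i u) := by
  rw [LS, pd_neg, pd_sum]
  congr 1
  rw [← Finset.Ico_add_one_right_eq_Icc, Finset.sum_Ico_eq_sum_range]
  have hN : N + 1 + 1 - 1 = N + 1 := by omega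
  rw [hN, Finset.sum_mul]
  apply Finset.sum_congr rfl
  intro j _
  rw [add_comm 1 j, pd_smul, pd_pow]
  have hsc : (((j + 1 : ℕ) : ℚ)⁻¹) • (((j + 1 : ℕ) : MvPowerSeries σ ℚ) * u ^ j * pd ℚ i u)
      = ((((j + 1 : ℕ) : ℚ)⁻¹ * ((j + 1 : ℕ) : ℚ))) • (u ^ j * pd ℚ i u) := by
    rw [mul_assoc, ← nsmul_eq_mul, ← Nat.cast_smul_eq_nsmul ℚ, smul_smul]
  have h1j : ((j + 1 : ℕ) : ℚ)⁻¹ * ((j + 1 : ℕ) : ℚ) = 1 := by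
    have : ((j + 1 : ℕ) : ℚ) ≠ 0 := by positivity
    field_simp
  rw [hsc, h1j, one_smul]

theorem pd_logOneSubS (i : σ) (u : MvPowerSeries σ ℚ)
    (hu : MvPowerSeries.constantCoeff (σ := σ) (R := ℚ) u = 0) :
    (1 - u) * pd ℚ i (logOneSubS u) = -(pd ℚ i u) := by
  apply MvPowerSeries.ext; intro m
  set N := mdeg m with hN
  have hrepl : MvPowerSeries.coeff (R := ℚ) m ((1 - u) * pd ℚ i (logOneSubS u))
      = MvPowerSeries.coeff (R := ℚ) m ((1 - u) * pd ℚ i (LS u (N + 1))) := by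
    apply mul_coeff_congr
    intro q hq
    rw [pd_coeff, pd_coeff, coeff_logOneSubS_eq u hu _ (N + 1)
      (by rw [mdeg_add, mdeg_single]; omega)]
  rw [hrepl]
  have hkey : (1 - u) * pd ℚ i (LS u (N + 1)) = -(pd ℚ i u) + pd ℚ i u * u ^ (N + 1) := by
    rw [pd_LS]
    have hG := geom_sum_mul u (N + 1)
    linear_combination (pd ℚ i u) * hG
  rw [hkey, map_add, coeff_mul_pow_high (pd ℚ i u) u hu m (N + 1) (by omega), add_zero]

end AuxQ

namespace AuxQ
open MvPowerSeries Finset Aux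

theorem uniq (Φ Δ : MvPowerSeries (Fin 2) ℚ)
    (hpde : pd ℚ 1 Δ = Φ * pd ℚ 0 Δ)
    (hinit : ∀ n : ℕ, MvPowerSeries.coeff (R := ℚ) (Finsupp.single 0 n) Δ = 0) : Δ = 0 := by
  suffices h : ∀ b : ℕ, ∀ m : Fin 2 →₀ ℕ, m 1 ≤ b → MvPowerSeries.coeff (R := ℚ) m Δ = 0 by
    apply MvPowerSeries.ext; intro m
    rw [h (m 1) m le_rfl, map_zero]
  intro b
  induction b with
  | zero =>
    intro m hm
    have hmeq : m = Finsupp.single 0 (m 0) := by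
      ext x
      fin_cases x
      · simp
      · simp only [Finsupp.single_apply]
        norm_num
        omega
    rw [hmeq]
    exact hinit (m 0)
  | succ b ih =>
    intro m hm
    rcases Nat.lt_or_ge (m 1) (b + 1) with h | h
    · exact ih m (by omega)
    · have hm1 : m 1 = b + 1 := by omega
      set m' := m - Finsupp.single 1 1 with hm'def
      have hm' : m' + Finsupp.single 1 1 = m := by
        ext x
        fin_cases x
        · simp only [hm'def, Finsupp.add_apply, Finsupp.tsub_apply, Finsupp.single_apply]
          norm_num
        · simp only [hm'def, Finsupp.add_apply, Finsupp.tsub_apply, Finsupp.single_apply]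
          norm_num
          omega
      have hm'1 : m' 1 = b := by
        simp only [hm'def, Finsupp.tsub_apply, Finsupp.single_apply]
        norm_num
        omega
      have hL : MvPowerSeries.coeff (R := ℚ) m' (pd ℚ 1 Δ)
          = ((b + 1 : ℕ) : ℚ) * MvPowerSeries.coeff (R := ℚ) m Δ := by
        rw [pd_coeff, hm', hm'1]
      have hR : MvPowerSeries.coeff (R := ℚ) m' (Φ * pd ℚ 0 Δ) = 0 := by
        rw [MvPowerSeries.coeff_mul]
        apply Finset.sum_eq_zero
        rintro ⟨p, q⟩ hpq
        simp only [Finset.HasAntidiagonal.mem_antidiagonal] at hpq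
        dsimp only
        have hq1 : q 1 ≤ b := by
          have := DFunLike.congr_fun hpq (1 : Fin 2)
          simp only [Finsupp.add_apply] at this
          omega
        have hco : MvPowerSeries.coeff (R := ℚ) q (pd ℚ 0 Δ) = 0 := by
          have hz := ih (q + Finsupp.single 0 1)
          rw [pd_coeff, hz (by
            simp only [Finsupp.add_apply, Finsupp.single_apply]
            norm_num
            omega), mul_zero]
        rw [hco, mul_zero]
      rw [hpde, hR] at hL
      have hne : ((b + 1 : ℕ) : ℚ) ≠ 0 := by positivity
      have := (mul_eq_zero.mp hL.symm).resolve_left hne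
      exact this
end AuxQ

/-- Let `Φ = exp(x + sΦ)` and `Ψ₁ = −½·log(1 − sΦ)`.  If `Ψ₂`
satisfies `∂Ψ₂/∂s = ½(∂²Ψ₁/∂x² + 2Φ·∂Ψ₂/∂x + (∂Ψ₁/∂x)²)` with `Ψ₂|_{s=0} = 0`, then
`Ψ₂ = Φ⁻¹·((5/24)·Y³ + (1/8)·Y²)` where `Y = sΦ(1 − sΦ)⁻¹`. -/
theorem stmt15 (Φ Ψ₂ : MvPowerSeries (Fin 2) ℚ)
    (hΦ : Φ = expS (MvPowerSeries.X 0 + MvPowerSeries.X 1 * Φ))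
    (heq : pd ℚ 1 Ψ₂ = (2 : ℚ)⁻¹ •
      (pd ℚ 0 (pd ℚ 0 (psiOneComb Φ)) + 2 * Φ * pd ℚ 0 Ψ₂ + (pd ℚ 0 (psiOneComb Φ)) ^ 2))
    (hinit : ∀ n : ℕ, MvPowerSeries.coeff (R := ℚ) (Finsupp.single 0 n) Ψ₂ = 0) :
    Ψ₂ = Φ⁻¹ * (MvPowerSeries.C (σ := Fin 2) (R := ℚ) (5 / 24) * (yComb Φ) ^ 3 +
      MvPowerSeries.C (σ := Fin 2) (R := ℚ) (1 / 8) * (yComb Φ) ^ 2) := by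
  classical
  have h10 : (1 : Fin 2) ≠ 0 := by decide
  have h01 : (0 : Fin 2) ≠ 1 := by decide
  -- constant coefficients and units
  have hg0 : MvPowerSeries.constantCoeff (σ := Fin 2) (R := ℚ)
      (MvPowerSeries.X 0 + MvPowerSeries.X 1 * Φ) = 0 := by
    simp [MvPowerSeries.constantCoeff_X]
  have hCΦ : MvPowerSeries.constantCoeff (σ := Fin 2) (R := ℚ) Φ = 1 := by
    rw [hΦ]; exact AuxQ.constantCoeff_expS _
  have h1 : Φ * Φ⁻¹ = 1 :=
    MvPowerSeries.mul_inv_cancel Φ (by rw [hCΦ]; exact one_ne_zero)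
  have h2 : (1 - MvPowerSeries.X 1 * Φ) * (1 - MvPowerSeries.X 1 * Φ)⁻¹ = 1 :=
    MvPowerSeries.mul_inv_cancel _ (by
      simp [MvPowerSeries.constantCoeff_X])
  have hU0 : MvPowerSeries.constantCoeff (σ := Fin 2) (R := ℚ) (MvPowerSeries.X 1 * Φ) = 0 := by
    simp [MvPowerSeries.constantCoeff_X]
  -- constants
  have hc2u : MvPowerSeries.C (σ := Fin 2) (R := ℚ) ((2:ℚ)⁻¹) = 12 * MvPowerSeries.C (σ := Fin 2) (R := ℚ) (1/24) := by
    rw [← map_ofNat (MvPowerSeries.C (σ := Fin 2) (R := ℚ)) 12, ← map_mul]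
    congr 1; norm_num
  have hc3u : MvPowerSeries.C (σ := Fin 2) (R := ℚ) (5/24) = 5 * MvPowerSeries.C (σ := Fin 2) (R := ℚ) (1/24) := by
    rw [← map_ofNat (MvPowerSeries.C (σ := Fin 2) (R := ℚ)) 5, ← map_mul]
    congr 1; norm_num
  have hc4u : MvPowerSeries.C (σ := Fin 2) (R := ℚ) (1/8) = 3 * MvPowerSeries.C (σ := Fin 2) (R := ℚ) (1/24) := by
    rw [← map_ofNat (MvPowerSeries.C (σ := Fin 2) (R := ℚ)) 3, ← map_mul]
    congr 1; norm_num
  have hu24 : (24 : MvPowerSeries (Fin 2) ℚ) * MvPowerSeries.C (σ := Fin 2) (R := ℚ) (1/24) = 1 := by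
    rw [← map_ofNat (MvPowerSeries.C (σ := Fin 2) (R := ℚ)) 24, ← map_mul]
    rw [show (24:ℚ) * (1/24) = 1 by norm_num]
    exact map_one _
  -- derivative of Φ
  have e0 : pd ℚ 0 Φ = (1 + MvPowerSeries.X 1 * pd ℚ 0 Φ) * Φ := by
    conv_lhs => rw [hΦ]
    rw [AuxQ.pd_expS 0 _ hg0, ← hΦ, Aux.pd_add, Aux.pd_X_self, Aux.pd_mul,
      Aux.pd_X_ne 0 1 h10]
    ring
  have e1 : pd ℚ 1 Φ = (Φ + MvPowerSeries.X 1 * pd ℚ 1 Φ) * Φ := by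
    conv_lhs => rw [hΦ]
    rw [AuxQ.pd_expS 1 _ hg0, ← hΦ, Aux.pd_add, Aux.pd_X_ne 1 0 h01, Aux.pd_mul,
      Aux.pd_X_self]
    ring
  have D0a : pd ℚ 0 Φ = Φ * (1 - MvPowerSeries.X 1 * Φ)⁻¹ := by
    linear_combination (1 - MvPowerSeries.X 1 * Φ)⁻¹ * e0 - pd ℚ 0 Φ * h2
  have D1a : pd ℚ 1 Φ = Φ^2 * (1 - MvPowerSeries.X 1 * Φ)⁻¹ := by
    linear_combination (1 - MvPowerSeries.X 1 * Φ)⁻¹ * e1 - pd ℚ 1 Φ * h2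
  -- derivative of Φ⁻¹
  have r0 : pd ℚ 0 Φ * Φ⁻¹ + Φ * pd ℚ 0 (Φ⁻¹) = 0 := by
    have := congrArg (pd ℚ 0) h1
    rwa [Aux.pd_mul, Aux.pd_one] at this
  have r1 : pd ℚ 1 Φ * Φ⁻¹ + Φ * pd ℚ 1 (Φ⁻¹) = 0 := by
    have := congrArg (pd ℚ 1) h1
    rwa [Aux.pd_mul, Aux.pd_one] at this
  rw [D0a] at r0
  rw [D1a] at r1
  have D0b : pd ℚ 0 (Φ⁻¹) = -(Φ⁻¹ * (1 - MvPowerSeries.X 1 * Φ)⁻¹) := by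
    linear_combination Φ⁻¹ * r0 - (pd ℚ 0 (Φ⁻¹) + Φ⁻¹ * (1 - MvPowerSeries.X 1 * Φ)⁻¹) * h1
  have D1b : pd ℚ 1 (Φ⁻¹) = -(1 - MvPowerSeries.X 1 * Φ)⁻¹ := by
    linear_combination Φ⁻¹ * r1 -
      ((1 - MvPowerSeries.X 1 * Φ)⁻¹ * (Φ * Φ⁻¹ + 1) + pd ℚ 1 (Φ⁻¹)) * h1
  -- derivative of (1 - X1 Φ)⁻¹
  have rv0 : pd ℚ 0 (1 - MvPowerSeries.X 1 * Φ) * (1 - MvPowerSeries.X 1 * Φ)⁻¹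
      + (1 - MvPowerSeries.X 1 * Φ) * pd ℚ 0 ((1 - MvPowerSeries.X 1 * Φ)⁻¹) = 0 := by
    have := congrArg (pd ℚ 0) h2
    rwa [Aux.pd_mul, Aux.pd_one] at this
  have rv1 : pd ℚ 1 (1 - MvPowerSeries.X 1 * Φ) * (1 - MvPowerSeries.X 1 * Φ)⁻¹
      + (1 - MvPowerSeries.X 1 * Φ) * pd ℚ 1 ((1 - MvPowerSeries.X 1 * Φ)⁻¹) = 0 := by
    have := congrArg (pd ℚ 1) h2
    rwa [Aux.pd_mul, Aux.pd_one] at this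
  have sv0 : pd ℚ 0 (1 - MvPowerSeries.X 1 * Φ)
      = -(MvPowerSeries.X 1 * (Φ * (1 - MvPowerSeries.X 1 * Φ)⁻¹)) := by
    rw [Aux.pd_sub, Aux.pd_one, Aux.pd_mul, Aux.pd_X_ne 0 1 h10, D0a]
    ring
  have sv1 : pd ℚ 1 (1 - MvPowerSeries.X 1 * Φ)
      = -(Φ + MvPowerSeries.X 1 * (Φ^2 * (1 - MvPowerSeries.X 1 * Φ)⁻¹)) := by
    rw [Aux.pd_sub, Aux.pd_one, Aux.pd_mul, Aux.pd_X_self, D1a]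
    ring
  rw [sv0] at rv0
  rw [sv1] at rv1
  have D0v : pd ℚ 0 ((1 - MvPowerSeries.X 1 * Φ)⁻¹)
      = MvPowerSeries.X 1 * Φ * ((1 - MvPowerSeries.X 1 * Φ)⁻¹)^3 := by
    linear_combination (1 - MvPowerSeries.X 1 * Φ)⁻¹ * rv0
      - pd ℚ 0 ((1 - MvPowerSeries.X 1 * Φ)⁻¹) * h2
  have D1v : pd ℚ 1 ((1 - MvPowerSeries.X 1 * Φ)⁻¹)
      = Φ * ((1 - MvPowerSeries.X 1 * Φ)⁻¹)^2
        + MvPowerSeries.X 1 * Φ^2 * ((1 - MvPowerSeries.X 1 * Φ)⁻¹)^3 := by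
    linear_combination (1 - MvPowerSeries.X 1 * Φ)⁻¹ * rv1
      - pd ℚ 1 ((1 - MvPowerSeries.X 1 * Φ)⁻¹) * h2
  -- Ψ₁ derivatives
  have hlog0 : (1 - MvPowerSeries.X 1 * Φ) * pd ℚ 0 (logOneSubS (MvPowerSeries.X 1 * Φ))
      = -(pd ℚ 0 (MvPowerSeries.X 1 * Φ)) := AuxQ.pd_logOneSubS 0 _ hU0
  have spdU : pd ℚ 0 (MvPowerSeries.X 1 * Φ)
      = MvPowerSeries.X 1 * (Φ * (1 - MvPowerSeries.X 1 * Φ)⁻¹) := by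
    rw [Aux.pd_mul, Aux.pd_X_ne 0 1 h10, D0a]
    ring
  rw [spdU] at hlog0
  have hLog : pd ℚ 0 (logOneSubS (MvPowerSeries.X 1 * Φ))
      = -(MvPowerSeries.X 1 * Φ * ((1 - MvPowerSeries.X 1 * Φ)⁻¹)^2) := by
    linear_combination (1 - MvPowerSeries.X 1 * Φ)⁻¹ * hlog0
      - pd ℚ 0 (logOneSubS (MvPowerSeries.X 1 * Φ)) * h2
  have hpsi1 : psiOneComb Φ
      = -((2:ℚ)⁻¹) • logOneSubS (MvPowerSeries.X 1 * Φ) := rfl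
  have hP1x : pd ℚ 0 (psiOneComb Φ)
      = MvPowerSeries.C (σ := Fin 2) (R := ℚ) ((2:ℚ)⁻¹)
        * (MvPowerSeries.X 1 * Φ * ((1 - MvPowerSeries.X 1 * Φ)⁻¹)^2) := by
    rw [hpsi1, Aux.pd_smul, hLog, smul_neg, neg_smul, neg_neg, MvPowerSeries.smul_eq_C_mul]
  have hP1xx : pd ℚ 0 (pd ℚ 0 (psiOneComb Φ))
      = MvPowerSeries.C (σ := Fin 2) (R := ℚ) ((2:ℚ)⁻¹)
        * ((1) * Φ * ((1 - MvPowerSeries.X 1 * Φ)⁻¹)^3 * (MvPowerSeries.X 1)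
          + (2) * Φ^2 * ((1 - MvPowerSeries.X 1 * Φ)⁻¹)^4 * (MvPowerSeries.X 1)^2) := by
    rw [hP1x]
    rw [Aux.pd_mul, Aux.pd_C, Aux.pd_mul, Aux.pd_mul, Aux.pd_X_ne 0 1 h10,
      Aux.pd_sq, D0a, D0v]
    ring
  -- derivatives of the candidate
  have hy : yComb Φ = MvPowerSeries.X 1 * Φ * (1 - MvPowerSeries.X 1 * Φ)⁻¹ := rfl
  have hD0Psi : pd ℚ 0 (Φ⁻¹ * (MvPowerSeries.C (σ := Fin 2) (R := ℚ) (5 / 24) * (yComb Φ) ^ 3 +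
        MvPowerSeries.C (σ := Fin 2) (R := ℚ) (1 / 8) * (yComb Φ) ^ 2))
      = MvPowerSeries.C (σ := Fin 2) (R := ℚ) (5 / 24) * ((2) * Φ^3 * Φ⁻¹ * ((1 - MvPowerSeries.X 1 * Φ)⁻¹)^4 * (MvPowerSeries.X 1)^3 + (3) * Φ^4 * Φ⁻¹ * ((1 - MvPowerSeries.X 1 * Φ)⁻¹)^5 * (MvPowerSeries.X 1)^4)
        + MvPowerSeries.C (σ := Fin 2) (R := ℚ) (1 / 8) * ((1) * Φ^2 * Φ⁻¹ * ((1 - MvPowerSeries.X 1 * Φ)⁻¹)^3 * (MvPowerSeries.X 1)^2 + (2) * Φ^3 * Φ⁻¹ * ((1 - MvPowerSeries.X 1 * Φ)⁻¹)^4 * (MvPowerSeries.X 1)^3) := by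
    rw [hy, Aux.pd_mul, Aux.pd_add, Aux.pd_mul, Aux.pd_mul, Aux.pd_C, Aux.pd_C,
      Aux.pd_cube, Aux.pd_sq, Aux.pd_mul, Aux.pd_mul, Aux.pd_X_ne 0 1 h10,
      D0a, D0b, D0v]
    ring
  have hD1Psi : pd ℚ 1 (Φ⁻¹ * (MvPowerSeries.C (σ := Fin 2) (R := ℚ) (5 / 24) * (yComb Φ) ^ 3 +
        MvPowerSeries.C (σ := Fin 2) (R := ℚ) (1 / 8) * (yComb Φ) ^ 2))
      = MvPowerSeries.C (σ := Fin 2) (R := ℚ) (5 / 24) * ((-1) * Φ^3 * ((1 - MvPowerSeries.X 1 * Φ)⁻¹)^4 * (MvPowerSeries.X 1)^3 + (3) * Φ^3 * Φ⁻¹ * ((1 - MvPowerSeries.X 1 * Φ)⁻¹)^3 * (MvPowerSeries.X 1)^2 + (6) * Φ^4 * Φ⁻¹ * ((1 - MvPowerSeries.X 1 * Φ)⁻¹)^4 * (MvPowerSeries.X 1)^3 + (3) * Φ^5 * Φ⁻¹ * ((1 - MvPowerSeries.X 1 * Φ)⁻¹)^5 * (MvPowerSeries.X 1)^4)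
        + MvPowerSeries.C (σ := Fin 2) (R := ℚ) (1 / 8) * ((-1) * Φ^2 * ((1 - MvPowerSeries.X 1 * Φ)⁻¹)^3 * (MvPowerSeries.X 1)^2 + (2) * Φ^2 * Φ⁻¹ * ((1 - MvPowerSeries.X 1 * Φ)⁻¹)^2 * (MvPowerSeries.X 1) + (4) * Φ^3 * Φ⁻¹ * ((1 - MvPowerSeries.X 1 * Φ)⁻¹)^3 * (MvPowerSeries.X 1)^2 + (2) * Φ^4 * Φ⁻¹ * ((1 - MvPowerSeries.X 1 * Φ)⁻¹)^4 * (MvPowerSeries.X 1)^3) := by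
    rw [hy, Aux.pd_mul, Aux.pd_add, Aux.pd_mul, Aux.pd_mul, Aux.pd_C, Aux.pd_C,
      Aux.pd_cube, Aux.pd_sq, Aux.pd_mul, Aux.pd_mul, Aux.pd_X_self,
      D1a, D1b, D1v]
    ring
  -- the candidate satisfies the PDE
  have hstar_pde : pd ℚ 1 (Φ⁻¹ * (MvPowerSeries.C (σ := Fin 2) (R := ℚ) (5 / 24) * (yComb Φ) ^ 3 +
        MvPowerSeries.C (σ := Fin 2) (R := ℚ) (1 / 8) * (yComb Φ) ^ 2))
      = MvPowerSeries.C (σ := Fin 2) (R := ℚ) ((2:ℚ)⁻¹) *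
        (pd ℚ 0 (pd ℚ 0 (psiOneComb Φ))
          + 2 * Φ * pd ℚ 0 (Φ⁻¹ * (MvPowerSeries.C (σ := Fin 2) (R := ℚ) (5 / 24) * (yComb Φ) ^ 3 +
              MvPowerSeries.C (σ := Fin 2) (R := ℚ) (1 / 8) * (yComb Φ) ^ 2))
          + (pd ℚ 0 (psiOneComb Φ)) ^ 2) := by
    rw [hD1Psi, hD0Psi, hP1xx, hP1x]
    simp only [hc2u, hc3u, hc4u]
    linear_combination ((3456) * Φ * ((1 - MvPowerSeries.X 1 * Φ)⁻¹)^2 * (MvPowerSeries.X 1) * MvPowerSeries.C (σ := Fin 2) (R := ℚ) (1/24)^3 + (13824) * Φ^2 * ((1 - MvPowerSeries.X 1 * Φ)⁻¹)^3 * (MvPowerSeries.X 1)^2 * MvPowerSeries.C (σ := Fin 2) (R := ℚ) (1/24)^3 + (11520) * Φ^3 * ((1 - MvPowerSeries.X 1 * Φ)⁻¹)^4 * (MvPowerSeries.X 1)^3 * MvPowerSeries.C (σ := Fin 2) (R := ℚ) (1/24)^3) * h1 - ((3456) * Φ * ((1 - MvPowerSeries.X 1 * Φ)⁻¹)^2 *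 (MvPowerSeries.X 1) * MvPowerSeries.C (σ := Fin 2) (R := ℚ) (1/24)^3 + (8640) * Φ^2 * ((1 - MvPowerSeries.X 1 * Φ)⁻¹)^3 * (MvPowerSeries.X 1)^2 * MvPowerSeries.C (σ := Fin 2) (R := ℚ) (1/24)^3) * h2 + ((144) * Φ * ((1 - MvPowerSeries.X 1 * Φ)⁻¹)^3 * (MvPowerSeries.X 1) * MvPowerSeries.C (σ := Fin 2) (R := ℚ) (1/24)^2 + (3) * Φ^2 * ((1 - MvPowerSeries.X 1 * Φ)⁻¹)^3 * (MvPowerSeries.X 1)^2 * MvPowerSeries.C (σ := Fin 2) (R := ℚ) (1/24) + (72) * Φ^2 * ((1 - MvPowerSeries.X 1 * Φ)⁻¹)^3 * (MvPowerSeries.X 1)^2 * MvPowerSeries.C (σ := Fin 2) (R := ℚ) (1/24)^2 + (288) * Φ^2 * ((1 - MvPowerSeries.X 1 * Φ)⁻¹)^4 * (MvPowerSeries.X 1)^2 * MvPowerSeries.C (σ := Fin 2) (R := ℚ) (1/24)^2 + (-6) * Φ^2 * Φ⁻¹ * ((1 - MvPowerSeries.X 1 * Φ)⁻¹)^2 *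 (MvPowerSeries.X 1) * MvPowerSeries.C (σ := Fin 2) (R := ℚ) (1/24) + (-144) * Φ^2 * Φ⁻¹ * ((1 - MvPowerSeries.X 1 * Φ)⁻¹)^2 * (MvPowerSeries.X 1) * MvPowerSeries.C (σ := Fin 2) (R := ℚ) (1/24)^2 + (5) * Φ^3 * ((1 - MvPowerSeries.X 1 * Φ)⁻¹)^4 * (MvPowerSeries.X 1)^3 * MvPowerSeries.C (σ := Fin 2) (R := ℚ) (1/24) + (120) * Φ^3 * ((1 - MvPowerSeries.X 1 * Φ)⁻¹)^4 * (MvPowerSeries.X 1)^3 * MvPowerSeries.C (σ := Fin 2) (R := ℚ) (1/24)^2 + (-27) * Φ^3 * Φ⁻¹ * ((1 - MvPowerSeries.X 1 * Φ)⁻¹)^3 * (MvPowerSeries.X 1)^2 * MvPowerSeries.C (σ := Fin 2) (R := ℚ) (1/24) + (-576) * Φ^3 * Φ⁻¹ * ((1 - MvPowerSeries.X 1 * Φ)⁻¹)^3 * (MvPowerSeries.X 1)^2 * MvPowerSeries.C (σ := Fin 2) (R := ℚ) (1/24)^2 + (-36) * Φ^4 * Φ⁻¹ * ((1 - MvPowerSeries.X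 1 * Φ)⁻¹)^4 * (MvPowerSeries.X 1)^3 * MvPowerSeries.C (σ := Fin 2) (R := ℚ) (1/24) + (-480) * Φ^4 * Φ⁻¹ * ((1 - MvPowerSeries.X 1 * Φ)⁻¹)^4 * (MvPowerSeries.X 1)^3 * MvPowerSeries.C (σ := Fin 2) (R := ℚ) (1/24)^2 + (-15) * Φ^5 * Φ⁻¹ * ((1 - MvPowerSeries.X 1 * Φ)⁻¹)^5 * (MvPowerSeries.X 1)^4 * MvPowerSeries.C (σ := Fin 2) (R := ℚ) (1/24)) * hu24
  -- the candidate satisfies the initial condition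
  have hstar_init : ∀ n : ℕ, MvPowerSeries.coeff (R := ℚ) (Finsupp.single 0 n)
      (Φ⁻¹ * (MvPowerSeries.C (σ := Fin 2) (R := ℚ) (5 / 24) * (yComb Φ) ^ 3 +
        MvPowerSeries.C (σ := Fin 2) (R := ℚ) (1 / 8) * (yComb Φ) ^ 2)) = 0 := by
    intro n
    have hfac : Φ⁻¹ * (MvPowerSeries.C (σ := Fin 2) (R := ℚ) (5 / 24) * (yComb Φ) ^ 3 +
          MvPowerSeries.C (σ := Fin 2) (R := ℚ) (1 / 8) * (yComb Φ) ^ 2)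
        = MvPowerSeries.X 1 *
          (Φ⁻¹ * (MvPowerSeries.C (σ := Fin 2) (R := ℚ) (5 / 24) * (MvPowerSeries.X 1)^2 *
              (Φ * (1 - MvPowerSeries.X 1 * Φ)⁻¹)^3
            + MvPowerSeries.C (σ := Fin 2) (R := ℚ) (1 / 8) * (MvPowerSeries.X 1) *
              (Φ * (1 - MvPowerSeries.X 1 * Φ)⁻¹)^2)) := by
      rw [hy]; ring
    rw [hfac, MvPowerSeries.coeff_mul]
    apply Finset.sum_eq_zero
    rintro ⟨p, q⟩ hpq
    simp only [Finset.HasAntidiagonal.mem_antidiagonal] at hpq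
    dsimp only
    rw [MvPowerSeries.coeff_X]
    have hne : p ≠ Finsupp.single (1 : Fin 2) 1 := by
      intro hc
      have := DFunLike.congr_fun hpq (1 : Fin 2)
      rw [hc] at this
      simp [Finsupp.single_apply, Finsupp.add_apply] at this
    rw [if_neg hne, zero_mul]
  -- conclude by uniqueness
  rw [MvPowerSeries.smul_eq_C_mul] at heq
  have hdiff_pde : pd ℚ 1 (Ψ₂ - (Φ⁻¹ * (MvPowerSeries.C (σ := Fin 2) (R := ℚ) (5 / 24) * (yComb Φ) ^ 3 +
        MvPowerSeries.C (σ := Fin 2) (R := ℚ) (1 / 8) * (yComb Φ) ^ 2)))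
      = Φ * pd ℚ 0 (Ψ₂ - (Φ⁻¹ * (MvPowerSeries.C (σ := Fin 2) (R := ℚ) (5 / 24) * (yComb Φ) ^ 3 +
        MvPowerSeries.C (σ := Fin 2) (R := ℚ) (1 / 8) * (yComb Φ) ^ 2))) := by
    rw [Aux.pd_sub, Aux.pd_sub]
    have hc2' : MvPowerSeries.C (σ := Fin 2) (R := ℚ) ((2:ℚ)⁻¹) * 2 = 1 := by
      rw [← map_ofNat (MvPowerSeries.C (σ := Fin 2) (R := ℚ)) 2, ← map_mul]
      rw [show (2:ℚ)⁻¹ * 2 = 1 by norm_num]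
      exact map_one _
    linear_combination heq - hstar_pde +
      (Φ * (pd ℚ 0 Ψ₂ - pd ℚ 0 (Φ⁻¹ * (MvPowerSeries.C (σ := Fin 2) (R := ℚ) (5 / 24) * (yComb Φ) ^ 3 +
        MvPowerSeries.C (σ := Fin 2) (R := ℚ) (1 / 8) * (yComb Φ) ^ 2)))) * hc2'
  have hdiff_init : ∀ n : ℕ, MvPowerSeries.coeff (R := ℚ) (Finsupp.single 0 n)
      (Ψ₂ - (Φ⁻¹ * (MvPowerSeries.C (σ := Fin 2) (R := ℚ) (5 / 24) * (yComb Φ) ^ 3 +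
        MvPowerSeries.C (σ := Fin 2) (R := ℚ) (1 / 8) * (yComb Φ) ^ 2))) = 0 := by
    intro n
    rw [map_sub, hinit n, hstar_init n, sub_zero]
  have hz := AuxQ.uniq Φ _ hdiff_pde hdiff_init
  exact sub_eq_zero.mp hz
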